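/- Let G be a finite group and H a finite abelian group. If f: G → H is perfect nonlinear, then for every irreducible unitary representation ρ: G → U(V) of G and every nontrivial β ∈ H, the Hilbert–Schmidt norm satisfies ‖Σ_{x∈G} χ_β(f(x)) ρ(x)‖² = |G| · dim(V), where ‖λ‖² = tr(λ ∘ λ*). -/

import Mathlib

/-- `f` is balanced: every fiber has cardinality `|X| / |H|`. -/
def IsBalanced {X H : Type} [Fintype X] [Fintype H] (f : X → H) : Prop :=
  ∀ y : H, Nat.card {x : X // f x = y} * Fintype.card H = Fintype.card X

/-- `f : G → H` is perfect nonlinear: every nontrivial left derivative is balanced. -/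
def IsPerfectNonlinear {G H : Type} [Group G] [Fintype G] [Group H] [Fintype H]
    (f : G → H) : Prop :=
  ∀ α : G, α ≠ 1 → IsBalanced (fun x : G => f (α * x) * (f x)⁻¹)

lemma char_map_inv {H : Type} [CommGroup H] (φ : H →* ℂ) (h : H) :
    φ h⁻¹ = (φ h)⁻¹ :=
  eq_inv_of_mul_eq_one_left (by rw [← map_mul, inv_mul_cancel, map_one])

lemma char_conj {H : Type} [CommGroup H] [Fintype H] (φ : H →* ℂ) (h : H) :
    (starRingEnd ℂ) (φ h) = φ h⁻¹ := by
  have hn : φ h ^ Fintype.card H = 1 := by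
    rw [← map_pow, pow_card_eq_one, map_one]
  have habs : ‖φ h‖ = 1 := Complex.norm_eq_one_of_pow_eq_one hn Fintype.card_ne_zero
  rw [char_map_inv, Complex.inv_eq_conj habs]

lemma sum_char_eq_zero {H : Type} [CommGroup H] [Fintype H] (φ : H →* ℂ) (hφ : φ ≠ 1) :
    ∑ h : H, φ h = 0 := by
  obtain ⟨h0, hh0⟩ : ∃ h0 : H, φ h0 ≠ 1 := by
    by_contra hc
    push_neg at hc
    exact hφ (MonoidHom.ext fun h => hc h)
  have key : φ h0 * ∑ h : H, φ h = ∑ h : H, φ h := by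
    rw [Finset.mul_sum]
    refine Fintype.sum_bijective (fun h => h0 * h) (Group.mulLeft_bijective h0) _ _ ?_
    intro h
    rw [← map_mul]
  have : (φ h0 - 1) * ∑ h : H, φ h = 0 := by
    rw [sub_mul, one_mul, key, sub_self]
  rcases mul_eq_zero.mp this with h | h
  · exact absurd (by linear_combination h : φ h0 = 1) hh0
  · exact h

lemma balanced_char_sum {G H : Type} [Fintype G] [CommGroup H] [Fintype H]
    (g : G → H) (hg : IsBalanced g) (φ : H →* ℂ) (hφ : φ ≠ 1) :
    ∑ x : G, φ (g x) = 0 := by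
  classical
  have h1 : ∑ x : G, φ (g x) = ∑ h : H, (Nat.card {x : G // g x = h} : ℂ) * φ h := by
    rw [← Fintype.sum_fiberwise g (fun x => φ (g x))]
    refine Finset.sum_congr rfl fun h _ => ?_
    rw [Finset.sum_congr rfl (fun x _ => by rw [x.2]), Finset.sum_const, Finset.card_univ,
      nsmul_eq_mul, Nat.card_eq_fintype_card]
  have h2 : (Fintype.card H : ℂ) * ∑ x : G, φ (g x) = 0 := by
    rw [h1, Finset.mul_sum]
    calc ∑ h : H, (Fintype.card H : ℂ) * ((Nat.card {x : G // g x = h} : ℂ) * φ h)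
        = ∑ h : H, (Fintype.card G : ℂ) * φ h := by
          refine Finset.sum_congr rfl fun h _ => ?_
          rw [← mul_assoc, ← Nat.cast_mul, mul_comm (Fintype.card H), hg h]
      _ = 0 := by rw [← Finset.mul_sum, sum_char_eq_zero φ hφ, mul_zero]
  have hH : (Fintype.card H : ℂ) ≠ 0 := Nat.cast_ne_zero.mpr Fintype.card_ne_zero
  exact (mul_eq_zero.mp h2).resolve_left hH

theorem stmt13 {G H : Type} [Group G] [Fintype G] [CommGroup H] [Fintype H]
    (χ : H ≃* (H →* ℂ)) (f : G → H)
    (hf : IsPerfectNonlinear f)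
    {V : Type} [NormedAddCommGroup V] [InnerProductSpace ℂ V] [FiniteDimensional ℂ V]
    (ρ : Representation ℂ G V)
    (hirr : Nontrivial V ∧
      ∀ U : Submodule ℂ V, (∀ (g : G) (v : V), v ∈ U → ρ g v ∈ U) → U = ⊥ ∨ U = ⊤)
    (hunitary : ∀ (g : G) (u v : V), (inner ℂ (ρ g u) (ρ g v) : ℂ) = inner ℂ u v)
    (β : H) (hβ : β ≠ 1) :
    LinearMap.trace ℂ V
        ((∑ x : G, χ β (f x) • ρ x) ∘ₗ LinearMap.adjoint (∑ x : G, χ β (f x) • ρ x))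
      = (Fintype.card G : ℂ) * (Module.finrank ℂ V : ℂ) := by
  classical
  have hχβ : χ β ≠ 1 := fun h => hβ (χ.injective (h.trans χ.map_one.symm))
  -- adjoint of ρ g is ρ g⁻¹
  have hadj : ∀ g : G, LinearMap.adjoint (ρ g) = ρ g⁻¹ := by
    intro g
    symm
    rw [LinearMap.eq_adjoint_iff]
    intro x y
    calc (inner ℂ (ρ g⁻¹ x) y : ℂ) = inner ℂ (ρ g (ρ g⁻¹ x)) (ρ g y) := (hunitary g _ _).symm
      _ = inner ℂ x (ρ g y) := by
          rw [← Module.End.mul_apply, ← map_mul, mul_inv_cancel, map_one, Module.End.one_apply]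
  have hadjM : LinearMap.adjoint (∑ x : G, χ β (f x) • ρ x)
      = ∑ y : G, (starRingEnd ℂ) (χ β (f y)) • ρ y⁻¹ := by
    rw [map_sum]
    exact Finset.sum_congr rfl fun y _ => by
      rw [LinearMap.adjoint.map_smulₛₗ, hadj]
  rw [hadjM]
  have hcomp : (∑ x : G, χ β (f x) • ρ x) ∘ₗ (∑ y : G, (starRingEnd ℂ) (χ β (f y)) • ρ y⁻¹)
      = ∑ x : G, ∑ y : G, (χ β (f x * (f y)⁻¹)) • ρ (x * y⁻¹) := by
    rw [← Module.End.mul_eq_comp, Finset.sum_mul_sum]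
    refine Finset.sum_congr rfl fun x _ => Finset.sum_congr rfl fun y _ => ?_
    rw [smul_mul_smul_comm, char_conj, ← map_mul, ← map_mul]
  rw [hcomp, map_sum]
  have step : ∀ x : G, (LinearMap.trace ℂ V) (∑ y : G, (χ β (f x * (f y)⁻¹)) • ρ (x * y⁻¹))
      = ∑ y : G, (χ β (f x * (f y)⁻¹)) * (LinearMap.trace ℂ V) (ρ (x * y⁻¹)) := by
    intro x
    rw [map_sum]
    exact Finset.sum_congr rfl fun y _ => by rw [map_smul, smul_eq_mul]
  simp only [step]
  rw [Finset.sum_comm]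
  have reindex : ∀ y : G,
      ∑ x : G, (χ β (f x * (f y)⁻¹)) * (LinearMap.trace ℂ V) (ρ (x * y⁻¹))
      = ∑ α : G, (χ β (f (α * y) * (f y)⁻¹)) * (LinearMap.trace ℂ V) (ρ α) := by
    intro y
    rw [← Equiv.sum_comp (Equiv.mulRight y)
      (fun x => (χ β (f x * (f y)⁻¹)) * (LinearMap.trace ℂ V) (ρ (x * y⁻¹)))]
    refine Finset.sum_congr rfl fun α _ => ?_
    simp [mul_inv_cancel_right]
  simp only [reindex]
  rw [Finset.sum_comm]
  have final : ∀ α : G,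
      ∑ y : G, (χ β (f (α * y) * (f y)⁻¹)) * (LinearMap.trace ℂ V) (ρ α)
      = (∑ y : G, χ β (f (α * y) * (f y)⁻¹)) * (LinearMap.trace ℂ V) (ρ α) := by
    intro α; rw [Finset.sum_mul]
  simp only [final]
  rw [Fintype.sum_eq_single (1 : G) (fun α hα => by
    rw [balanced_char_sum _ (hf α hα) (χ β) hχβ, zero_mul])]
  simp only [one_mul, mul_inv_cancel, map_one]
  rw [Finset.sum_const, Finset.card_univ, nsmul_eq_mul, mul_one]
  rw [LinearMap.trace_one]
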